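/- arXiv:1301.7633 — 2 statements merged into one kernel-verified Lean document; each statement's English description precedes it below -/
import Mathlib

section
/- Let X be a projective scheme in P^N and p ∈ X a point. Fix homogeneous coordinates x_0, …, x_N on P^N such that p = [1:0:⋯:0]. Assume that X is defined by homogeneous polynomials f_1, …, f_r in a neighborhood of p, and write f_j = Σ_{i=1}^{d_j} x_0^{d_j − i} f_j^i, where d_j = deg f_j and f_j^i ∈ ℂ[x_1, …, x_N] is homogeneous of degree i. Then F_p(X), viewed as a subscheme of F_p(P^N) ≅ Proj ℂ[x_1, …, x_N], is defined by the polynomials { f_j^i : 1 ≤ j ≤ r, 1 ≤ i ≤ d_j }. -/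
/-!
Common framework: classical projective geometry over ℂ, with projective space
`ℙ^{n-1} = Pr n` realized as the projectivization of `ℂ^n`, algebraic subsets as
zero loci of homogeneous polynomials, lines/linear subspaces via linear subspaces,
degree and multiplicity of curves via hyperplane counting, the Seshadri constant
of `O_X(1)` at a point via the curve-infimum formula, and the invariant `d_p(X)`
via local generation of the ideal sheaf by forms of a given degree.
-/

open scoped Classical
open Function Set

noncomputable section

namespace PaperSC

/-- Projective space of lines in `ℂ^n`; `Pr (N+1)` is the usual `ℙ^N` over `ℂ`. -/
abbrev Pr (n : ℕ) := Projectivization ℂ (Fin n → ℂ)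

/-- Polynomial ring in `n` variables over `ℂ` (homogeneous coordinates). -/
abbrev Poly (n : ℕ) := MvPolynomial (Fin n) ℂ

variable {n : ℕ}

/-- A (homogeneous) polynomial vanishes at a projective point. -/
def VanishAt (f : Poly n) (x : Pr n) : Prop :=
  ∀ (v : Fin n → ℂ) (hv : v ≠ 0), Projectivization.mk ℂ v hv = x → MvPolynomial.eval v f = 0

/-- Common zero locus in projective space of a set of polynomials. -/
def zeroLocus (S : Set (Poly n)) : Set (Pr n) := {x | ∀ f ∈ S, VanishAt f x}

/-- The polynomial is homogeneous (of some degree). -/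
def IsHomog (f : Poly n) : Prop := ∃ d, f.IsHomogeneous d

/-- Zariski-closed algebraic subsets of projective space. -/
def IsAlgSet (X : Set (Pr n)) : Prop :=
  ∃ S : Set (Poly n), (∀ f ∈ S, IsHomog f) ∧ X = zeroLocus S

/-- A projective subvariety: a nonempty irreducible Zariski-closed subset. -/
def IsSubvariety (X : Set (Pr n)) : Prop :=
  IsAlgSet X ∧ X.Nonempty ∧
    ∀ A B : Set (Pr n), IsAlgSet A → IsAlgSet B → X ⊆ A ∪ B → X ⊆ A ∨ X ⊆ B

/-- Dimension of a subset of projective space: the supremum of the lengths of strict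
chains of subvarieties contained in it. -/
def dim (X : Set (Pr n)) : ℕ :=
  sSup {k | ∃ Z : Fin (k + 1) → Set (Pr n),
    (∀ i, IsSubvariety (Z i) ∧ Z i ⊆ X) ∧ StrictMono Z}

/-- A linear subvariety of projective space, given by a linear subspace of the
indicated (linear-algebra) rank. -/
def IsLinearOfRank (r : ℕ) (L : Set (Pr n)) : Prop :=
  ∃ W : Submodule ℂ (Fin n → ℂ), Module.finrank ℂ W = r ∧
    L = {x : Pr n | x.submodule ≤ W}

/-- A line in projective space (projective curve of degree 1). -/
def IsLine (L : Set (Pr n)) : Prop := IsLinearOfRank 2 L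

/-- A hyperplane in `Pr n = ℙ^{n-1}`. -/
def IsHyperplane (H : Set (Pr n)) : Prop := IsLinearOfRank (n - 1) H

/-- A projective curve: a subvariety of dimension 1. -/
def IsCurve (C : Set (Pr n)) : Prop := IsSubvariety C ∧ dim C = 1

/-- Degree of a (reduced irreducible) curve in projective space: the maximal number of
points in which a hyperplane not containing it meets it. -/
def degCurve (C : Set (Pr n)) : ℕ :=
  sSup {k | ∃ H, IsHyperplane H ∧ ¬ C ⊆ H ∧ k = (C ∩ H).ncard}

/-- Multiplicity of a curve at a point `p`: `deg C` minus the maximal number of points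
away from `p` in which a hyperplane through `p` (not containing `C`) meets `C`. -/
def multAt (C : Set (Pr n)) (p : Pr n) : ℕ :=
  degCurve C -
    sSup {k | ∃ H, IsHyperplane H ∧ p ∈ H ∧ ¬ C ⊆ H ∧ k = ((C ∩ H) \ {p}).ncard}

/-- The Seshadri constant `ε(X, O_X(1); p)`: the infimum of `deg C / mult_p C` over
reduced irreducible curves `C ⊆ X` through `p`. -/
def seshadri (X : Set (Pr n)) (p : Pr n) : ℝ :=
  sInf {r : ℝ | ∃ C : Set (Pr n), IsCurve C ∧ C ⊆ X ∧ p ∈ C ∧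
    r = (degCurve C : ℝ) / (multAt C p : ℝ)}

/-- `F_p(X)`: the set of lines on `X` passing through `p`. -/
def linesThrough (X : Set (Pr n)) (p : Pr n) : Set (Set (Pr n)) :=
  {L | IsLine L ∧ L ⊆ X ∧ p ∈ L}

/-- The cone `Cone F_p(X)` with vertex `p` over the lines of `X` through `p`. -/
def coneOfLines (X : Set (Pr n)) (p : Pr n) : Set (Pr n) :=
  {p} ∪ ⋃ L ∈ linesThrough X p, L

/-- Degree of a projective variety `X`: the maximal (finite) number of points in which a
linear subvariety of complementary dimension meets `X`. -/
def degVar (X : Set (Pr n)) : ℕ :=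
  sSup {k | ∃ L, IsLinearOfRank (n - dim X) L ∧ (X ∩ L).Finite ∧ k = (X ∩ L).ncard}

/-- Dehomogenization in the affine chart `x_i ≠ 0` (substitute `x_i = 1`). -/
def subst1 (i : Fin n) : Poly n →ₐ[ℂ] Poly n :=
  MvPolynomial.aeval (Function.update MvPolynomial.X i 1)

/-- Affine coordinates of a projective point in the chart `x_i ≠ 0`. -/
def acoord (i : Fin n) (p : Pr n) : Fin n → ℂ := fun j => p.rep j / p.rep i

/-- The maximal ideal of the point with affine coordinates `a`. -/
def mIdeal (a : Fin n → ℂ) : Ideal (Poly n) :=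
  Ideal.span (Set.range fun j => MvPolynomial.X j - MvPolynomial.C (a j))

/-- Homogeneous polynomials of degree `d` vanishing on `X`,
i.e. `H^0(ℙ^{n-1}, I_X ⊗ O(d))`. -/
def homVan (X : Set (Pr n)) (d : ℕ) : Set (Poly n) :=
  {f | f.IsHomogeneous d ∧ ∀ x ∈ X, VanishAt f x}

/-- All homogeneous polynomials vanishing on `X`. -/
def vanPolys (X : Set (Pr n)) : Set (Poly n) := ⋃ d, homVan X d

/-- The homogeneous ideal of `X`. -/
def homIdeal (X : Set (Pr n)) : Ideal (Poly n) := Ideal.span (vanPolys X)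

/-- The affine ideal of `X` in the chart `x_i ≠ 0`. -/
def affIdeal (i : Fin n) (X : Set (Pr n)) : Ideal (Poly n) :=
  Ideal.span (⇑(subst1 i) '' vanPolys X)

/-- `X` is cut out scheme-theoretically at `p` by hypersurfaces of degree `d`:
the stalk at `p` of the ideal sheaf `I_X` is generated by the degree-`d` forms
vanishing on `X`, i.e. the natural map
`H^0(ℙ^N, I_X ⊗ O(d)) ⊗ O → I_X ⊗ O(d)` is surjective at `p`. -/
def CutOutAt (X : Set (Pr n)) (p : Pr n) (d : ℕ) : Prop :=
  ∀ f ∈ vanPolys X, ∃ (i : Fin n) (s : Poly n), p.rep i ≠ 0 ∧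
    MvPolynomial.eval (acoord i p) s ≠ 0 ∧
    s * subst1 i f ∈ Ideal.span (⇑(subst1 i) '' homVan X d)

/-- `d_p(X)`: the least degree `d` such that `X` is cut out at `p` by degree-`d`
hypersurfaces. -/
def dP (X : Set (Pr n)) (p : Pr n) : ℕ := sInf {d | CutOutAt X p d}

/-- `ord_p` of the effective divisor cut on `X` by the homogeneous polynomial `f`:
the largest `m` with the local equation of `f` lying in `m_p^m ⊆ O_{X,p}`. -/
def ordAt (X : Set (Pr n)) (p : Pr n) (f : Poly n) : ℕ :=
  sSup {m | ∃ (i : Fin n) (s : Poly n), p.rep i ≠ 0 ∧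
    MvPolynomial.eval (acoord i p) s ≠ 0 ∧
    s * subst1 i f ∈ mIdeal (acoord i p) ^ m ⊔ affIdeal i X}

/-- Differential of a polynomial at the affine point `a`. -/
def diffAt (a : Fin n → ℂ) (g : Poly n) : (Fin n → ℂ) →ₗ[ℂ] ℂ :=
  ∑ j : Fin n, MvPolynomial.eval a (MvPolynomial.pderiv j g) • LinearMap.proj j

/-- Zariski tangent space of `X` at `p`, computed in the chart `x_i ≠ 0` (it contains the
one extra "dummy" direction of the substituted variable). -/
def tangentAt (X : Set (Pr n)) (i : Fin n) (p : Pr n) : Submodule ℂ (Fin n → ℂ) :=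
  ⨅ f ∈ vanPolys X, LinearMap.ker (diffAt (acoord i p) (subst1 i f))

/-- Smoothness of `X` at `p` (Jacobian criterion). -/
def IsSmoothPt (X : Set (Pr n)) (p : Pr n) : Prop :=
  ∃ i : Fin n, p.rep i ≠ 0 ∧ Module.finrank ℂ ↥(tangentAt X i p) = dim X + 1

/-- A smooth projective set. -/
def IsSmooth (X : Set (Pr n)) : Prop := ∀ p ∈ X, IsSmoothPt X p

/-- `P` holds for a general point of `X`: it holds away from a proper closed subset. -/
def GeneralPt (X : Set (Pr n)) (P : Pr n → Prop) : Prop :=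
  ∃ Z : Set (Pr n), IsAlgSet Z ∧ ¬ X ⊆ Z ∧ ∀ p ∈ X \ Z, P p

/-- The coordinate vector of the point `[1:0:⋯:0]`. -/
def e0vec (n : ℕ) : Fin (n + 1) → ℂ := Fin.cons 1 0

lemma e0vec_ne (n : ℕ) : e0vec n ≠ 0 := by
  intro h
  simpa [e0vec] using congrFun h 0

/-- The point `p = [1:0:⋯:0] ∈ ℙ^n`. -/
def pt0 (n : ℕ) : Pr (n + 1) := Projectivization.mk ℂ (e0vec n) (e0vec_ne n)

/-- The line through `[1:0:⋯:0]` with direction `u ∈ ℙ^{n-1}`; this realizes the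
identification `F_p(ℙ^n) ≅ ℙ^{n-1} = Proj ℂ[x_1,…,x_n]`. -/
def dirLine (u : Pr n) : Set (Pr (n + 1)) :=
  {x | x.submodule ≤ Submodule.span ℂ
    ({Fin.cons 1 0, Fin.cons 0 u.rep} : Set (Fin (n + 1) → ℂ))}

/-- Embedding `ℂ[x_1,…,x_n] → ℂ[x_0,x_1,…,x_n]`. -/
def emb : Poly n →ₐ[ℂ] Poly (n + 1) := MvPolynomial.rename Fin.succ

/-- An effective Cartier divisor on `X ⊆ ℙ^{n-1}`, given by local equations
`num a / den a` (ratios of homogeneous forms of equal degrees) on an open cover of `X`,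
whose numerators are local nonzerodivisors and which agree up to units on overlaps. -/
structure EffCartier (n : ℕ) (X : Set (Pr n)) where
  idx : Type
  U : idx → Set (Pr n)
  isOpen : ∀ a, ∃ Z, IsAlgSet Z ∧ U a = X \ Z
  covers : ∀ x ∈ X, ∃ a, x ∈ U a
  num : idx → Poly n
  den : idx → Poly n
  deg_eq : ∀ a, ∃ d, (num a).IsHomogeneous d ∧ (den a).IsHomogeneous d
  den_ne : ∀ a, ∀ x ∈ U a, ¬ VanishAt (den a) x
  regular : ∀ a, ∀ q ∈ U a, ∀ i : Fin n, q.rep i ≠ 0 →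
    ∀ g s : Poly n, MvPolynomial.eval (acoord i q) s ≠ 0 →
      s * g * subst1 i (num a) ∈ affIdeal i X →
      ∃ t : Poly n, MvPolynomial.eval (acoord i q) t ≠ 0 ∧ t * g ∈ affIdeal i X
  compat : ∀ a b, ∀ q, q ∈ U a → q ∈ U b → ∀ i : Fin n, q.rep i ≠ 0 →
    ∃ s : Poly n, MvPolynomial.eval (acoord i q) s ≠ 0 ∧
      s * subst1 i (num a * den b) ∈
        Ideal.span {subst1 i (num b * den a)} ⊔ affIdeal i X

namespace EffCartier

variable {n : ℕ} {X : Set (Pr n)}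

/-- Support of the divisor. -/
def supp (D : EffCartier n X) : Set (Pr n) :=
  {x | x ∈ X ∧ ∃ a, x ∈ D.U a ∧ VanishAt (D.num a) x}

/-- `ord_p(D)`: the largest `m` such that a local equation of `D` lies in `m_p^m`. -/
def ordAtPt (D : EffCartier n X) (p : Pr n) : ℕ :=
  sSup {m | ∃ a, p ∈ D.U a ∧ ∃ (i : Fin n) (s : Poly n), p.rep i ≠ 0 ∧
    MvPolynomial.eval (acoord i p) s ≠ 0 ∧
    s * subst1 i (D.num a) ∈ mIdeal (acoord i p) ^ m ⊔ affIdeal i X}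

/-- Local intersection multiplicity of `D` with the curve `C` at `q`:
`dim_ℂ O_{C,q}/(local equation)`, computed as the stabilized value of the
finite-dimensional truncations. -/
def locMult (D : EffCartier n X) (C : Set (Pr n)) (q : Pr n) : ℕ :=
  sSup {m | ∃ (a : D.idx) (i : Fin n) (M : ℕ), q ∈ D.U a ∧ q.rep i ≠ 0 ∧
    m = Module.finrank ℂ
      (Poly n ⧸ (Ideal.span {subst1 i (D.num a)} ⊔ affIdeal i C ⊔
        mIdeal (acoord i q) ^ M))}

/-- The intersection number `C · D`: the sum of local intersection multiplicities. -/
def inter (D : EffCartier n X) (C : Set (Pr n)) : ℕ :=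
  ∑ᶠ q ∈ C ∩ D.supp, D.locMult C q

end EffCartier

/-- A conic: a smooth projective curve of degree 2. -/
def IsConic (C : Set (Pr n)) : Prop := IsCurve C ∧ degCurve C = 2 ∧ IsSmooth C

/-- Rows of a matrix-shaped tuple. -/
def row {a b : ℕ} (t : Fin a × Fin b → ℂ) (i : Fin a) : Fin b → ℂ := fun j => t (i, j)

/-- The image of the degree-2 parametrization `[s:u] ↦ s²t₀ + su t₁ + u²t₂`; for linearly
independent `t₀,t₁,t₂` this is exactly a conic, and all conics arise this way. -/
def conicOf (t : Fin 3 × Fin n → ℂ) : Set (Pr n) :=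
  {x | ∃ s u : ℂ,
    ∃ h : (s ^ 2 • row t 0 + (s * u) • row t 1 + u ^ 2 • row t 2) ≠ 0,
      Projectivization.mk ℂ (s ^ 2 • row t 0 + (s * u) • row t 1 + u ^ 2 • row t 2) h = x}

/-- Parameter space of (parametrized) conics on `Y` through `p`. Two parameters give the
same conic exactly along an orbit of the 4-dimensional group `GL₂(ℂ) × scalings`, so
`dim R_p(Y) = affDim (conicParams Y p) - 4`. -/
def conicParams (Y : Set (Pr n)) (p : Pr n) : Set (Fin 3 × Fin n → ℂ) :=
  {t | LinearIndependent ℂ (row t) ∧ conicOf t ⊆ Y ∧ p ∈ conicOf t}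

/-- Affine algebraic subsets of an affine space `ι → ℂ`. -/
def AffAlg {ι : Type} (S : Set (ι → ℂ)) : Prop :=
  ∃ T : Set (MvPolynomial ι ℂ), S = {a | ∀ f ∈ T, MvPolynomial.eval a f = 0}

/-- Affine varieties: nonempty irreducible affine algebraic sets. -/
def AffVariety {ι : Type} (S : Set (ι → ℂ)) : Prop :=
  AffAlg S ∧ S.Nonempty ∧
    ∀ A B : Set (ι → ℂ), AffAlg A → AffAlg B → S ⊆ A ∪ B → S ⊆ A ∨ S ⊆ B

/-- Zariski closure in affine space. -/
def aclosure {ι : Type} (S : Set (ι → ℂ)) : Set (ι → ℂ) :=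
  ⋂₀ {Z | AffAlg Z ∧ S ⊆ Z}

/-- Dimension of a subset of affine space, via chains of subvarieties of its closure. -/
def affDim {ι : Type} (S : Set (ι → ℂ)) : ℕ :=
  sSup {k | ∃ Z : Fin (k + 1) → Set (ι → ℂ),
    (∀ i, AffVariety (Z i) ∧ Z i ⊆ aclosure S) ∧ StrictMono Z}

/-- An irreducible component of (the closure of) `S`. -/
def IsAffComponent {ι : Type} (T S : Set (ι → ℂ)) : Prop :=
  AffVariety T ∧ T ⊆ aclosure S ∧
    ∀ T' : Set (ι → ℂ), AffVariety T' → T' ⊆ aclosure S → T ⊆ T' → T = T'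

/-- `P` holds for a general element of `S ⊆ (ι → ℂ)`. -/
def GeneralAff {ι : Type} (S : Set (ι → ℂ)) (P : (ι → ℂ) → Prop) : Prop :=
  ∃ Z : Set (ι → ℂ), AffAlg Z ∧ ¬ S ⊆ Z ∧ ∀ w ∈ S \ Z, P w

/-- The linear form with coefficient vector `w`. -/
def linForm (w : Fin n → ℂ) : Poly n :=
  ∑ j : Fin n, MvPolynomial.C (w j) * MvPolynomial.X j

/-- The hyperplane with coefficient vector `w`. -/
def hypOf (w : Fin n → ℂ) : Set (Pr n) := zeroLocus {linForm w}

/-- `I_Y ⊗ O(d)` is globally generated: at every point the stalk of the ideal sheaf of `Y`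
is generated by the degree-`d` forms vanishing on `Y`. -/
def SheafGenByDeg (Y : Set (Pr n)) (d : ℕ) : Prop :=
  ∀ q : Pr n, ∀ f ∈ vanPolys Y, ∃ (i : Fin n) (s : Poly n), q.rep i ≠ 0 ∧
    MvPolynomial.eval (acoord i q) s ≠ 0 ∧
    s * subst1 i f ∈ Ideal.span (⇑(subst1 i) '' homVan Y d)

/-- Surjectivity of `H^0(ℙ^N, I_C ⊗ O(1)) ⊗ O_Y → I_{C/Y} ⊗ O_Y(1)`: at every point of
`Y`, the stalk of `I_{C/Y}` is generated by the linear forms vanishing on `C`. -/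
def LinearCutOnY (Y C : Set (Pr n)) : Prop :=
  ∀ q ∈ Y, ∀ f ∈ vanPolys C, ∃ (i : Fin n) (s : Poly n), q.rep i ≠ 0 ∧
    MvPolynomial.eval (acoord i q) s ≠ 0 ∧
    s * subst1 i f ∈ Ideal.span (⇑(subst1 i) '' homVan C 1) ⊔ affIdeal i Y

/-- The projective transformation induced by a linear automorphism. -/
def pmap (g : (Fin n → ℂ) ≃ₗ[ℂ] (Fin n → ℂ)) : Pr n → Pr n :=
  Projectivization.map g.toLinearMap g.injective

/-- `Y` is a homogeneous space: the projective transformations preserving `Y` act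
transitively on `Y`. -/
def IsHomogSpace (Y : Set (Pr n)) : Prop :=
  ∀ p ∈ Y, ∀ q ∈ Y, ∃ g : (Fin n → ℂ) ≃ₗ[ℂ] (Fin n → ℂ),
    pmap g '' Y = Y ∧ pmap g p = q

/-- `Y ⊆ ℙ^N` is a rational homogeneous space of Picard number one, embedded by the ample
generator of its Picard group: a smooth homogeneous subvariety, every prime divisor of
which is (set-theoretically) a hypersurface section (Picard number one), carrying a line
(which forces the embedding to be by the ample generator and rules out abelian factors). -/
def IsRatHomog1 (Y : Set (Pr n)) : Prop :=
  IsSubvariety Y ∧ IsSmooth Y ∧ IsHomogSpace Y ∧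
    (∀ D : Set (Pr n), IsSubvariety D → D ⊆ Y → dim D + 1 = dim Y →
      ∃ g : Poly n, IsHomog g ∧ D = Y ∩ zeroLocus {g}) ∧
    ∃ p ∈ Y, (linesThrough Y p).Nonempty

/-- The Fano index `i(Y)` of a rational homogeneous space `Y` of Picard number one
embedded by the ample generator, characterized geometrically by
`dim F_p(Y) = i(Y) - 2`, i.e. `i(Y) = dim (Cone F_p(Y)) + 1`. -/
def fanoIndex (Y : Set (Pr n)) : ℕ :=
  sSup {k | ∃ p ∈ Y, k = dim (coneOfLines Y p) + 1}

/-- A polynomial function (in the coefficients) on tuples of polynomials. -/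
def IsPolyFun {κ : Type} {m : ℕ} (Φ : (κ → Poly m) → ℂ) : Prop :=
  ∃ F : MvPolynomial ((Fin m →₀ ℕ) × κ) ℂ, ∀ g,
    Φ g = MvPolynomial.eval (fun mc => MvPolynomial.coeff mc.1 (g mc.2)) F

/-- `P` holds for a general tuple of polynomials satisfying the shape condition `Q`:
there is a polynomial function in the coefficients, not identically zero on tuples
satisfying `Q`, whose nonvanishing implies `P`. -/
def GeneralTuple {κ : Type} {m : ℕ} (Q P : (κ → Poly m) → Prop) : Prop :=
  ∃ Φ : (κ → Poly m) → ℂ, IsPolyFun Φ ∧ (∃ g, Q g ∧ Φ g ≠ 0) ∧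
    ∀ g, Q g → Φ g ≠ 0 → P g

/-- The homogeneous coordinate ring of `C`. -/
abbrev CoordRing (C : Set (Pr n)) := Poly n ⧸ homIdeal C

/-- The ring whose graded pieces carry the conormal module `I_C/(I_C² + I_X)` of `C ⊆ X`. -/
abbrev ConormalRing (X C : Set (Pr n)) :=
  Poly n ⧸ (homIdeal C * homIdeal C ⊔ homIdeal X)

/-- Degree-`d` graded piece of the coordinate ring of `C`. -/
def coordGrade (C : Set (Pr n)) (d : ℕ) : Submodule ℂ (CoordRing C) :=
  Submodule.span ℂ (⇑(Ideal.Quotient.mk (homIdeal C)) ''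
    {f : Poly n | f.IsHomogeneous d})

/-- Degree-`d` graded piece of the conormal module `N^∨_{C/X} = I_C/(I_C² + I_X)`. -/
def conormalGrade (X C : Set (Pr n)) (d : ℕ) : Submodule ℂ (ConormalRing X C) :=
  Submodule.span ℂ (⇑(Ideal.Quotient.mk (homIdeal C * homIdeal C ⊔ homIdeal X)) ''
    homVan C d)

/-- The normal bundle `N_{C/X}` is trivial of rank `k` : equivalently its dual, the
conormal sheaf — the sheafification of the graded module `I_C/(I_C²+I_X)` — is isomorphic
to `O_C^k`, i.e. in all large degrees the graded conormal module is isomorphic, as a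
graded module over the coordinate ring of `C` (generated in degree one), to
(the truncation of) the free module `(S_C)^k`. -/
def ConormalTrivial (X C : Set (Pr n)) (k : ℕ) : Prop :=
  ∃ e0 : ℕ,
    ∃ ψ : ∀ d : ℕ, e0 ≤ d → ((Fin k → ↥(coordGrade C d)) ≃ₗ[ℂ] ↥(conormalGrade X C d)),
      ∀ (d : ℕ) (hd : e0 ≤ d) (h : Poly n), h.IsHomogeneous 1 →
        ∀ (x : Fin k → ↥(coordGrade C d)) (y : Fin k → ↥(coordGrade C (d + 1))),
          (∀ j, (y j : CoordRing C) =
            Ideal.Quotient.mk (homIdeal C) h * (x j : CoordRing C)) →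
          ((ψ (d + 1) (hd.trans (Nat.le_succ d)) y : ConormalRing X C) =
            Ideal.Quotient.mk (homIdeal C * homIdeal C ⊔ homIdeal X) h *
              (ψ d hd x : ConormalRing X C))

end PaperSC

namespace PaperSC


section AuxLemmas

variable {N : ℕ}

private lemma smul_cons_aux (c s : ℂ) (w : Fin N → ℂ) :
    c • (Fin.cons s w : Fin (N + 1) → ℂ) = (Fin.cons (c * s) (c • w) : Fin (N + 1) → ℂ) := by
  funext i; refine Fin.cases ?_ ?_ i <;> simp

private lemma cons_add_aux (a b : ℂ) (w : Fin N → ℂ) :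
    a • (Fin.cons 1 0 : Fin (N + 1) → ℂ) + b • (Fin.cons 0 w : Fin (N + 1) → ℂ) =
      (Fin.cons a (b • w) : Fin (N + 1) → ℂ) := by
  funext i; refine Fin.cases ?_ ?_ i <;> simp

private lemma eval_homog_aux {n d : ℕ} {g : Poly n} (hg : g.IsHomogeneous d) (c : ℂ)
    (v : Fin n → ℂ) : MvPolynomial.eval (c • v) g = c ^ d * MvPolynomial.eval v g := by
  rw [MvPolynomial.eval_eq, MvPolynomial.eval_eq, Finset.mul_sum]
  refine Finset.sum_congr rfl fun m hm => ?_
  have hd := hg (MvPolynomial.mem_support_iff.mp hm)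
  have hsum : (∑ i ∈ m.support, m i) = d := by
    rw [← hd]; simp [Finsupp.weight, Finsupp.linearCombination, Finsupp.sum]
  calc MvPolynomial.coeff m g * ∏ i ∈ m.support, (c • v) i ^ m i
      = MvPolynomial.coeff m g * ∏ i ∈ m.support, (c ^ m i * v i ^ m i) := by
        simp [Pi.smul_apply, mul_pow]
    _ = c ^ d * (MvPolynomial.coeff m g * ∏ i ∈ m.support, v i ^ m i) := by
        rw [Finset.prod_mul_distrib, Finset.prod_pow_eq_pow_sum, hsum]; ring

private lemma eval_aeval_aux {m : ℕ} (φ : Fin m → Polynomial ℂ) (g : Poly m) (z : ℂ) :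
    Polynomial.eval z (MvPolynomial.aeval φ g) =
      MvPolynomial.eval (fun i => Polynomial.eval z (φ i)) g := by
  rw [MvPolynomial.aeval_def]
  have := MvPolynomial.eval₂_comp_left (Polynomial.evalRingHom z)
    (algebraMap ℂ (Polynomial ℂ)) φ g
  simp only [Polynomial.coe_evalRingHom] at this
  rw [this, MvPolynomial.eval]
  congr 1
  ext a; simp

private lemma poly_zero_aux {G : Polynomial ℂ} {s : Set ℂ} (hs : s.Finite)
    (h : ∀ z ∉ s, G.eval z = 0) : G = 0 := by
  apply Polynomial.eq_zero_of_infinite_isRoot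
  exact Set.Infinite.mono (fun z hz => h z hz) hs.infinite_compl

private lemma eval_cons_emb_aux (s : ℂ) (w : Fin N → ℂ) (g : Poly N) :
    MvPolynomial.eval (Fin.cons s w : Fin (N + 1) → ℂ) (emb g) = MvPolynomial.eval w g := by
  show MvPolynomial.eval _ (MvPolynomial.rename Fin.succ g) = _
  rw [MvPolynomial.eval_rename,
    show (Fin.cons s w : Fin (N + 1) → ℂ) ∘ Fin.succ = w from funext fun k => by simp]

end AuxLemmas

/-- Lemma: equations for `F_p(X)`.  Let `X ⊆ ℙ^N` be a projective
scheme containing `p = [1:0:⋯:0]`, defined in a neighbourhood of `p` (the complement of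
a closed set `Z ∌ p`) by the homogeneous polynomials `f_j` of degrees `d_j`, and write
`f_j = Σ_{i=1}^{d_j} x_0^{d_j-i} f_j^i` with `f_j^i ∈ ℂ[x_1,…,x_N]` homogeneous of
degree `i`.  Then, under the identification of the lines of `ℙ^N` through `p` with the
points of `ℙ^{N-1} = Proj ℂ[x_1,…,x_N]`, the moduli `F_p(X)` of lines on `X` through `p`
is defined by the polynomials `f_j^i` (for `1 ≤ j ≤ r`, `1 ≤ i ≤ d_j`). -/
theorem lines_through_point_defined_by_components
    (N r : ℕ) (X : Set (Pr (N + 1)))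
    (hX : IsAlgSet X) (hp : pt0 N ∈ X)
    (Z : Set (Pr (N + 1))) (hZ : IsAlgSet Z) (hpZ : pt0 N ∉ Z)
    (f : Fin r → Poly (N + 1)) (db : Fin r → ℕ)
    (fI : Fin r → ℕ → Poly N)
    (hfI : ∀ j i, (fI j i).IsHomogeneous i)
    (hdec : ∀ j, f j = ∑ i ∈ Finset.Icc 1 (db j),
      MvPolynomial.X 0 ^ (db j - i) * emb (fI j i))
    (hloc : X \ Z = zeroLocus (Set.range f) \ Z) :
    ∀ u : Pr N, dirLine u ⊆ X ↔
      ∀ j, ∀ i ∈ Finset.Icc 1 (db j), VanishAt (fI j i) u := by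
  -- unpack the algebraicity of `X` and `Z`
  obtain ⟨S, -, hXS⟩ := hX
  obtain ⟨T, -, hZT⟩ := hZ
  -- a polynomial from the defining set of `Z` not vanishing at `p = [1:0:...:0]`
  have hpZ' : ∃ h ∈ T, ∃ c : ℂ, c ≠ 0 ∧
      MvPolynomial.eval (Fin.cons c 0 : Fin (N + 1) → ℂ) h ≠ 0 := by
    rw [hZT] at hpZ
    simp only [zeroLocus, Set.mem_setOf_eq, not_forall] at hpZ
    obtain ⟨h, hhT, hnv⟩ := hpZ
    rw [VanishAt] at hnv; push_neg at hnv
    obtain ⟨v0, hv0, hmk, hne⟩ := hnv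
    rw [pt0, Projectivization.mk_eq_mk_iff] at hmk
    obtain ⟨a, ha⟩ := hmk
    refine ⟨h, hhT, (a : ℂ), a.ne_zero, ?_⟩
    have hv0eq : v0 = (Fin.cons (a : ℂ) 0 : Fin (N + 1) → ℂ) := by
      rw [← ha, e0vec, Units.smul_def, smul_cons_aux]; simp
    rwa [← hv0eq]
  -- expansion of `f j` along the line through `p` with direction `v`
  have eval_line : ∀ (j : Fin r) (s t : ℂ) (v : Fin N → ℂ),
      MvPolynomial.eval (Fin.cons s (t • v) : Fin (N + 1) → ℂ) (f j) =
        ∑ i ∈ Finset.Icc 1 (db j),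
          s ^ (db j - i) * (t ^ i * MvPolynomial.eval v (fI j i)) := by
    intro j s t v
    rw [hdec j, map_sum]
    refine Finset.sum_congr rfl fun i _ => ?_
    rw [map_mul, map_pow, MvPolynomial.eval_X, eval_cons_emb_aux,
      eval_homog_aux (hfI j i)]
    simp
  intro u
  -- structure of representatives of points on the line `dirLine u`
  have rep_str : ∀ x : Pr (N + 1), x ∈ dirLine u → ∀ (v : Fin (N + 1) → ℂ) (hv : v ≠ 0),
      Projectivization.mk ℂ v hv = x → ∃ s t : ℂ, v = Fin.cons s (t • u.rep) := by
    intro x hx v hv hmk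
    have h1 : (Projectivization.mk ℂ v hv).submodule ≤
        Submodule.span ℂ ({Fin.cons 1 0, Fin.cons 0 u.rep} : Set (Fin (N + 1) → ℂ)) := by
      rw [hmk]; exact hx
    rw [Projectivization.submodule_mk] at h1
    have h2 := h1 (Submodule.mem_span_singleton_self v)
    obtain ⟨a, b, hab⟩ := Submodule.mem_span_pair.mp h2
    exact ⟨a, b, by rw [← hab, cons_add_aux]⟩
  -- membership of explicit points in `dirLine u`
  have mem_line : ∀ (s t : ℂ) (hne : (Fin.cons s (t • u.rep) : Fin (N + 1) → ℂ) ≠ 0),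
      Projectivization.mk ℂ _ hne ∈ dirLine u := by
    intro s t hne
    show (Projectivization.mk ℂ _ hne).submodule ≤ _
    rw [Projectivization.submodule_mk, Submodule.span_singleton_le_iff_mem]
    exact Submodule.mem_span_pair.mpr ⟨s, t, cons_add_aux s t u.rep⟩
  constructor
  · -- line contained in X ⇒ components vanish at u
    intro hsub j i hi v hv hmk
    have hmk' : Projectivization.mk ℂ v hv =
        Projectivization.mk ℂ u.rep u.rep_nonzero := by
      rw [hmk]; exact (Projectivization.mk_rep u).symm
    obtain ⟨a, ha⟩ := (Projectivization.mk_eq_mk_iff ℂ _ _ _ _).mp hmk'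
    have hev : MvPolynomial.eval v (fI j i) =
        (a : ℂ) ^ i * MvPolynomial.eval u.rep (fI j i) := by
      rw [← ha]; exact eval_homog_aux (hfI j i) _ _
    rw [hev]
    suffices hrep : MvPolynomial.eval u.rep (fI j i) = 0 by rw [hrep, mul_zero]
    obtain ⟨h, hhT, c, hc, hch⟩ := hpZ'
    set φ : Fin (N + 1) → Polynomial ℂ :=
      Fin.cons (Polynomial.C c) (fun k => Polynomial.X * Polynomial.C (u.rep k)) with hφdef
    have hφ : ∀ z : ℂ, (fun i' => Polynomial.eval z (φ i')) =
        (Fin.cons c (z • u.rep) : Fin (N + 1) → ℂ) := by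
      intro z; funext i'; refine Fin.cases ?_ ?_ i' <;> simp [hφdef, mul_comm z]
    have hφne : ∀ z : ℂ, (Fin.cons c (z • u.rep) : Fin (N + 1) → ℂ) ≠ 0 := by
      intro z hz; exact hc (by simpa using congrFun hz (0 : Fin (N + 1)))
    set H := MvPolynomial.aeval φ h with hHdef
    have hH : H ≠ 0 := by
      intro h0
      apply hch
      have h1 := eval_aeval_aux φ h 0
      rw [← hHdef, h0, hφ 0] at h1
      have hv0 : (Fin.cons c ((0 : ℂ) • u.rep) : Fin (N + 1) → ℂ) = (Fin.cons c 0 : Fin (N + 1) → ℂ) := by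
        rw [zero_smul]
      rw [hv0] at h1
      simpa using h1.symm
    set P : Polynomial ℂ := ∑ i' ∈ Finset.Icc 1 (db j),
      Polynomial.C (c ^ (db j - i') * MvPolynomial.eval u.rep (fI j i')) *
        Polynomial.X ^ i' with hPdef
    have hP : P = 0 := by
      apply poly_zero_aux (Polynomial.finite_setOf_isRoot hH)
      intro z hz
      have hzH : Polynomial.eval z H ≠ 0 := hz
      have hωne := hφne z
      have hmemL : Projectivization.mk ℂ _ hωne ∈ dirLine u := mem_line c z hωne
      have hxz : Projectivization.mk ℂ _ hωne ∈ X := hsub hmemL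
      have h2 : Projectivization.mk ℂ _ hωne ∉ Z := by
        rw [hZT]
        intro hmem
        apply hzH
        have h3 := hmem h hhT _ hωne rfl
        rw [← hφ z] at h3
        rw [eval_aeval_aux] at hzH
        exact absurd h3 hzH
      have h3 : Projectivization.mk ℂ _ hωne ∈ zeroLocus (Set.range f) := by
        have h4 : Projectivization.mk ℂ _ hωne ∈ X \ Z := ⟨hxz, h2⟩
        rw [hloc] at h4
        exact h4.1
      have h4 := h3 (f j) ⟨j, rfl⟩ _ hωne rfl
      rw [eval_line j c z u.rep] at h4
      have h5 : Polynomial.eval z P = ∑ i' ∈ Finset.Icc 1 (db j),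
          c ^ (db j - i') * (z ^ i' * MvPolynomial.eval u.rep (fI j i')) := by
        rw [hPdef, Polynomial.eval_finset_sum]
        refine Finset.sum_congr rfl fun i' _ => ?_
        simp only [Polynomial.eval_mul, Polynomial.eval_C, Polynomial.eval_pow,
          Polynomial.eval_X]
        ring
      rw [h5, h4]
    have hco : P.coeff i = c ^ (db j - i) * MvPolynomial.eval u.rep (fI j i) := by
      rw [hPdef, Polynomial.finset_sum_coeff,
        Finset.sum_eq_single_of_mem i hi (fun b _ hbne => by
          rw [Polynomial.coeff_C_mul, Polynomial.coeff_X_pow, if_neg (Ne.symm hbne),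
            mul_zero])]
      rw [Polynomial.coeff_C_mul, Polynomial.coeff_X_pow, if_pos rfl, mul_one]
    rw [hP, Polynomial.coeff_zero] at hco
    rcases mul_eq_zero.mp hco.symm with h6 | h6
    · exact absurd h6 (pow_ne_zero _ hc)
    · exact h6
  · -- components vanish at u ⇒ line contained in X
    intro hvan x hx
    rw [hXS]
    intro g hgS v hv hmk
    obtain ⟨s, t, rfl⟩ := rep_str x hx v hv hmk
    by_cases ht : t = 0
    · subst ht
      have hmk0 : Projectivization.mk ℂ _ hv = pt0 N := by
        have hs : s ≠ 0 := by
          intro h; apply hv; funext i'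
          refine Fin.cases ?_ ?_ i' <;> simp [h]
        rw [pt0, Projectivization.mk_eq_mk_iff']
        exact ⟨s, by rw [e0vec, smul_cons_aux]; simp⟩
      have hpX := hp
      rw [hXS] at hpX
      exact hpX g hgS _ hv hmk0
    · obtain ⟨h, hhT, c, hc, hch⟩ := hpZ'
      set φ : Fin (N + 1) → Polynomial ℂ :=
        Fin.cons (Polynomial.C s + (Polynomial.C c - Polynomial.C s) * Polynomial.X)
          (fun k => (1 - Polynomial.X) * Polynomial.C (t * u.rep k)) with hφdef
      have hφ : ∀ z : ℂ, (fun i' => Polynomial.eval z (φ i')) =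
          (Fin.cons (s + (c - s) * z) (((1 - z) * t) • u.rep) : Fin (N + 1) → ℂ) := by
        intro z; funext i'
        refine Fin.cases ?_ ?_ i'
        · simp [hφdef]; try ring
        · intro k; simp [hφdef]; try ring
      have hφne : ∀ z : ℂ,
          (Fin.cons (s + (c - s) * z) (((1 - z) * t) • u.rep) : Fin (N + 1) → ℂ) ≠ 0 := by
        intro z hz
        by_cases hz1 : z = 1
        · subst hz1
          apply hc
          have h1 := congrFun hz (0 : Fin (N + 1))
          simp only [Fin.cons_zero, Pi.zero_apply] at h1
          linear_combination h1
        · obtain ⟨k, hk⟩ := Function.ne_iff.mp u.rep_nonzero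
          have h1 := congrFun hz (Fin.succ k : Fin (N + 1))
          simp only [Fin.cons_succ, Pi.smul_apply, Pi.zero_apply, smul_eq_mul] at h1
          exact (mul_ne_zero (mul_ne_zero (sub_ne_zero.mpr (fun hh => hz1 hh.symm)) ht)
            (by simpa using hk)) h1
      set G := MvPolynomial.aeval φ g with hGdef
      set H := MvPolynomial.aeval φ h with hHdef
      have hH : H ≠ 0 := by
        intro h0
        apply hch
        have h1 := eval_aeval_aux φ h 1
        rw [← hHdef, h0, hφ 1] at h1
        have hv1 : (Fin.cons (s + (c - s) * 1) (((1 - 1) * t) • u.rep) :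
            Fin (N + 1) → ℂ) = (Fin.cons c 0 : Fin (N + 1) → ℂ) := by
          funext i'; refine Fin.cases ?_ ?_ i' <;> simp <;> ring
        rw [hv1] at h1
        simpa using h1.symm
      have hG : G = 0 := by
        apply poly_zero_aux (Polynomial.finite_setOf_isRoot hH)
        intro z hz
        have hzH : Polynomial.eval z H ≠ 0 := hz
        have hωne := hφne z
        have h1 : Projectivization.mk ℂ _ hωne ∈ zeroLocus (Set.range f) := by
          intro f' hf'
          obtain ⟨j, rfl⟩ := hf'
          intro v' hv' hmk'
          obtain ⟨s', t', rfl⟩ := rep_str _ (mem_line _ _ hωne) v' hv' hmk'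
          rw [eval_line j s' t' u.rep]
          refine Finset.sum_eq_zero fun i hi => ?_
          rw [hvan j i hi u.rep u.rep_nonzero (Projectivization.mk_rep u)]
          ring
        have h2 : Projectivization.mk ℂ _ hωne ∉ Z := by
          rw [hZT]
          intro hmem
          apply hzH
          have h3 := hmem h hhT _ hωne rfl
          rw [← hφ z] at h3
          rw [eval_aeval_aux] at hzH
          exact absurd h3 hzH
        have h4 : Projectivization.mk ℂ _ hωne ∈ X := by
          have h5 : Projectivization.mk ℂ _ hωne ∈ zeroLocus (Set.range f) \ Z := ⟨h1, h2⟩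
          rw [← hloc] at h5
          exact h5.1
        rw [hXS] at h4
        have h6 := h4 g hgS _ hωne rfl
        rw [← hφ z] at h6
        rw [hGdef, eval_aeval_aux]
        exact h6
      have h0 := eval_aeval_aux φ g 0
      rw [← hGdef, hG, hφ 0] at h0
      have hvec0 : (Fin.cons (s + (c - s) * 0) (((1 - 0) * t) • u.rep) :
          Fin (N + 1) → ℂ) = Fin.cons s (t • u.rep) := by
        funext i'; refine Fin.cases ?_ ?_ i' <;> simp
      rw [hvec0] at h0
      simpa using h0.symm


end PaperSC
end
end

section
/- Let X ⊂ P^N be a projective variety, p = [1:0:⋯:0] ∈ X, d = d_p(X), and let f_1, …, f_r be a basis of H^0(P^N, I_X ⊗ O_{P^N}(d)). Write f_j = Σ_{i=1}^{d} x_0^{d−i} f_j^i with f_j^i ∈ ℂ[x_1, …, x_N] homogeneous of degree i, and for 1 ≤ i ≤ d−1, 1 ≤ j ≤ r set D_j^i = (x_0^{i−1} f_j^1 + x_0^{i−2} f_j^2 + ⋯ + x_0 f_j^{i−1} + f_j^i = 0) ⊂ P^N (possibly all of P^N). Then X ∩ ⋂_{1 ≤ i ≤ d−1, 1 ≤ j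 ≤ r} D_j^i ⊆ Cone F_p(X), the projective cone over F_p(X) in P^N with vertex p. In particular, if there is no line on X through p (i.e., F_p(X) = ∅), then ⋂_{i,j} (D_j^i ∩ X) = {p}. -/
/-!
Common framework: classical projective geometry over ℂ, with projective space
`ℙ^{n-1} = Pr n` realized as the projectivization of `ℂ^n`, algebraic subsets as
zero loci of homogeneous polynomials, lines/linear subspaces via linear subspaces,
degree and multiplicity of curves via hyperplane counting, the Seshadri constant
of `O_X(1)` at a point via the curve-infimum formula, and the invariant `d_p(X)`
via local generation of the ideal sheaf by forms of a given degree.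
-/

open scoped Classical
open Function Set

noncomputable section

namespace PaperSC

open MvPolynomial

variable {n : ℕ}

lemma aeval_eq_eval' (a : Fin n → ℂ) (f : Poly n) :
    MvPolynomial.aeval a f = MvPolynomial.eval a f := rfl

lemma eval_smul_of_isHomogeneous {e : ℕ} {f : Poly n} (hf : f.IsHomogeneous e)
    (c : ℂ) (x : Fin n → ℂ) :
    MvPolynomial.eval (c • x) f = c ^ e * MvPolynomial.eval x f := by
  rw [MvPolynomial.eval_eq', MvPolynomial.eval_eq', Finset.mul_sum]
  refine Finset.sum_congr rfl fun m hm => ?_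
  have h1 := hf (MvPolynomial.mem_support_iff.mp hm)
  have h2 : (Finsupp.weight (1 : Fin n → ℕ)) m = ∑ i, m i := by
    rw [Finsupp.weight_apply, Finsupp.sum]
    rw [Finset.sum_subset (Finset.subset_univ m.support) (fun i _ hi => by
      simp [Finsupp.notMem_support_iff.mp hi])]
    simp
  have hdeg : ∑ i, m i = e := by rw [← h2]; exact h1
  have h3 : ∏ i, (c • x) i ^ m i = c ^ e * ∏ i, x i ^ m i := by
    rw [← hdeg, ← Finset.prod_pow_eq_pow_sum, ← Finset.prod_mul_distrib]
    exact Finset.prod_congr rfl fun i _ => by simp [mul_pow]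
  rw [h3]; ring

lemma eval_subst1 (i : Fin n) (f : Poly n) (a : Fin n → ℂ) :
    MvPolynomial.eval a (subst1 i f) = MvPolynomial.eval (Function.update a i 1) f := by
  have h1 : MvPolynomial.eval a (subst1 i f)
      = MvPolynomial.aeval
        (fun j => MvPolynomial.eval a (Function.update MvPolynomial.X i 1 j)) f := by
    rw [← aeval_eq_eval', subst1, ← AlgHom.comp_apply, MvPolynomial.comp_aeval]
    rfl
  have h2 : (fun j => MvPolynomial.eval a (Function.update MvPolynomial.X i 1 j))
      = Function.update a i 1 := by
    funext j
    rcases eq_or_ne j i with h | h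
    · subst h; simp
    · simp [Function.update_apply, h]
  rw [h1, aeval_eq_eval', h2]

lemma mem_of_forall_vanish {X : Set (Pr n)} (hX : IsAlgSet X) {x : Pr n}
    (hx : ∀ g ∈ vanPolys X, VanishAt g x) : x ∈ X := by
  obtain ⟨S, hS1, hS2⟩ := hX
  rw [hS2]
  intro g hg
  apply hx
  obtain ⟨e, he⟩ := hS1 g hg
  exact Set.mem_iUnion.mpr ⟨e, he, fun y hy => by rw [hS2] at hy; exact hy g hg⟩

lemma cutOutAt_exists (X : Set (Pr n)) (p : Pr n) : ∃ d, CutOutAt X p d := by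
  obtain ⟨G, hG⟩ := IsNoetherian.noetherian (Ideal.span (vanPolys X) : Ideal (Poly n))
  have hGmem : ∀ g ∈ G, (g : Poly n) ∈ Submodule.span (Poly n) (vanPolys X) := by
    intro g hg
    rw [show Submodule.span (Poly n) (vanPolys X) = Ideal.span (vanPolys X) from rfl, ← hG]
    exact Ideal.subset_span hg
  choose T hT1 hT2 using fun (g : Poly n) (hg : g ∈ G) =>
    Submodule.mem_span_finite_of_mem_span (hGmem g hg)
  let TT : Finset (Poly n) := G.attach.biUnion (fun g => T g.1 g.2)
  have hTTvan : (↑TT : Set (Poly n)) ⊆ vanPolys X := by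
    intro t ht
    simp only [TT, Finset.coe_biUnion, Set.mem_iUnion] at ht
    obtain ⟨g, hg, hgt⟩ := ht
    exact hT1 g.1 g.2 hgt
  set E : Poly n → ℕ := fun t => sInf {e | t ∈ homVan X e} with hE
  set d : ℕ := TT.sup E with hdd
  have hmemT : ∀ t ∈ TT, t ∈ homVan X (E t) := by
    intro t ht
    have : {e | t ∈ homVan X e}.Nonempty := by
      have := hTTvan ht
      rw [vanPolys, Set.mem_iUnion] at this
      exact this
    exact Nat.sInf_mem this
  refine ⟨d, fun f hf => ?_⟩
  obtain ⟨i, hi⟩ : ∃ i, p.rep i ≠ 0 := Function.ne_iff.mp (Projectivization.rep_nonzero p)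
  refine ⟨i, 1, hi, by simp, ?_⟩
  rw [one_mul]
  have hfTT : f ∈ Ideal.span (↑TT : Set (Poly n)) := by
    have h1 : Ideal.span (vanPolys X) ≤ Ideal.span (↑TT : Set (Poly n)) := by
      rw [← hG]
      refine Submodule.span_le.mpr ?_
      intro g hg
      rw [SetLike.mem_coe]
      have h2 : Submodule.span (Poly n) ((T g hg : Set (Poly n)))
          ≤ Ideal.span (↑TT : Set (Poly n)) := by
        rw [Ideal.span, Submodule.span_le]
        refine le_trans ?_ Submodule.subset_span
        intro t ht
        simp only [TT, Finset.coe_biUnion, Set.mem_iUnion]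
        exact ⟨⟨g, hg⟩, Finset.mem_attach _ _, ht⟩
      exact h2 (hT2 g hg)
    exact h1 (Ideal.subset_span hf)
  have hmap : subst1 i f ∈ Ideal.span (⇑(subst1 i) '' (↑TT : Set (Poly n))) := by
    have h3 := Ideal.mem_map_of_mem (subst1 i).toRingHom hfTT
    rwa [Ideal.map_span] at h3
  refine Ideal.span_mono ?_ hmap
  rintro _ ⟨t, ht, rfl⟩
  have ht' : t ∈ TT := ht
  have hEt : E t ≤ d := Finset.le_sup ht'
  have hth := hmemT t ht'
  refine ⟨MvPolynomial.X i ^ (d - E t) * t, ?_, ?_⟩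
  · constructor
    · have h4 : ((MvPolynomial.X i : Poly n) ^ (d - E t) * t).IsHomogeneous
          (1 * (d - E t) + E t) :=
        ((MvPolynomial.isHomogeneous_X ℂ i).pow _).mul hth.1
      rwa [one_mul, Nat.sub_add_cancel hEt] at h4
    · intro x hx w hw hmk
      have h5 := hth.2 x hx w hw hmk
      simp [h5]
  · rw [map_mul, map_pow]
    have h6 : subst1 i (MvPolynomial.X i) = 1 := by
      rw [subst1, MvPolynomial.aeval_X, Function.update_self]
    rw [h6, one_pow, one_mul]

lemma rep_pt0 (N : ℕ) : ∃ c : ℂ, c ≠ 0 ∧ (pt0 N).rep = c • e0vec N := by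
  have h := (Projectivization.mk_eq_mk_iff ℂ _ _ ((pt0 N).rep_nonzero) (e0vec_ne N)).mp
    (Projectivization.mk_rep (pt0 N))
  obtain ⟨a, ha⟩ := h
  exact ⟨a, a.ne_zero, by rw [← ha, Units.smul_def]⟩

lemma pt0_index {N : ℕ} {i : Fin (N + 1)} (hi : (pt0 N).rep i ≠ 0) : i = 0 := by
  obtain ⟨c, hc, hrep⟩ := rep_pt0 N
  by_contra h
  apply hi
  rw [hrep]
  cases i using Fin.cases with
  | zero => exact absurd rfl h
  | succ j => simp [e0vec]

lemma acoord_pt0 (N : ℕ) : acoord 0 (pt0 N) = e0vec N := by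
  obtain ⟨c, hc, hrep⟩ := rep_pt0 N
  funext j
  show (pt0 N).rep j / (pt0 N).rep 0 = e0vec N j
  rw [hrep]
  simp only [Pi.smul_apply, smul_eq_mul]
  rw [show (e0vec N) 0 = 1 from rfl, mul_one]
  exact mul_div_cancel_left₀ _ hc

end PaperSC

namespace PaperSC

set_option maxRecDepth 10000 in
/-- the divisors `D_j^i` cut out the cone over `F_p(X)`.
Let `X ⊆ ℙ^N` contain `p = [1:0:⋯:0]`, let `d = d_p(X)`, let `f_1, …, f_r` be a basis of
`H^0(ℙ^N, I_X ⊗ O(d))` and write `f_j = Σ_{i=1}^d x_0^{d-i} f_j^i` with `f_j^i`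
homogeneous of degree `i` in `x_1,…,x_N`.  With
`D_j^i = (x_0^{i-1} f_j^1 + ⋯ + x_0 f_j^{i-1} + f_j^i = 0)` (`1 ≤ i ≤ d-1`), one has
`X ∩ ⋂_{i,j} D_j^i ⊆ Cone F_p(X)`; in particular if no line of `X` passes through `p`
then `⋂_{i,j} (D_j^i ∩ X) = {p}`. -/
theorem cap_divisors_subset_cone
    (N r : ℕ) (X : Set (Pr (N + 1)))
    (hX : IsSubvariety X) (hp : pt0 N ∈ X)
    (d : ℕ) (hd : d = dP X (pt0 N))
    (f : Fin r → Poly (N + 1))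
    (hmem : ∀ j, f j ∈ homVan X d)
    (hindep : LinearIndependent ℂ f)
    (hspan : ∀ g ∈ homVan X d, g ∈ Submodule.span ℂ (Set.range f))
    (fI : Fin r → ℕ → Poly N)
    (hfI : ∀ j i, (fI j i).IsHomogeneous i)
    (hdec : ∀ j, f j = ∑ i ∈ Finset.Icc 1 d,
      MvPolynomial.X 0 ^ (d - i) * emb (fI j i)) :
    (X ∩ ⋂ j, ⋂ i ∈ Finset.Icc 1 (d - 1),
        zeroLocus {∑ k ∈ Finset.Icc 1 i, MvPolynomial.X 0 ^ (i - k) * emb (fI j k)})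
      ⊆ coneOfLines X (pt0 N) ∧
    (linesThrough X (pt0 N) = ∅ →
      X ∩ ⋂ j, ⋂ i ∈ Finset.Icc 1 (d - 1),
        zeroLocus {∑ k ∈ Finset.Icc 1 i, MvPolynomial.X 0 ^ (i - k) * emb (fI j k)}
      = {pt0 N}) := by
  have hcut : CutOutAt X (pt0 N) d := by
    rw [hd]
    exact Nat.sInf_mem (cutOutAt_exists X (pt0 N))
  have main : (X ∩ ⋂ j, ⋂ i ∈ Finset.Icc 1 (d - 1),
      zeroLocus {∑ k ∈ Finset.Icc 1 i, MvPolynomial.X 0 ^ (i - k) * emb (fI j k)})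
      ⊆ coneOfLines X (pt0 N) := by
    rintro x ⟨hxX, hxD⟩
    simp only [Set.mem_iInter] at hxD
    by_cases hxp : x = pt0 N
    · exact Set.mem_union_left _ (by rw [hxp]; exact Set.mem_singleton _)
    set w := x.rep with hwdef
    have hw0 : w ≠ 0 := x.rep_nonzero
    set v : Fin N → ℂ := Fin.tail w with hvdef
    have hvne : v ≠ 0 := by
      intro h
      apply hxp
      have hw00 : w 0 ≠ 0 := by
        intro h0
        apply hw0
        funext j
        cases j using Fin.cases with
        | zero => exact h0
        | succ j => exact congrFun h j
      have hweq : (Units.mk0 (w 0) hw00 : ℂ) • e0vec N = w := by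
        funext j
        cases j using Fin.cases with
        | zero => simp [e0vec]
        | succ j =>
          have := congrFun h j
          simp only [Pi.zero_apply] at this
          simp [e0vec]
          exact this.symm
      calc x = Projectivization.mk ℂ w hw0 := (Projectivization.mk_rep x).symm
        _ = pt0 N := by
          show _ = Projectivization.mk ℂ (e0vec N) (e0vec_ne N)
          rw [Projectivization.mk_eq_mk_iff]
          exact ⟨Units.mk0 (w 0) hw00, by rw [Units.smul_def]; exact hweq⟩
    -- Step A: the pieces fI j k vanish at v
    have hA : ∀ (j : Fin r), ∀ k ∈ Finset.Icc 1 d,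
        (∑ m ∈ Finset.Icc 1 k, w 0 ^ (k - m) * MvPolynomial.eval v (fI j m)) = 0 := by
      intro j k hk
      rw [Finset.mem_Icc] at hk
      have heval : ∀ (P : Poly (N + 1)), VanishAt P x → MvPolynomial.eval w P = 0 :=
        fun P hP => hP w hw0 (Projectivization.mk_rep x)
      have hterm : ∀ (K : ℕ), MvPolynomial.eval w
          (∑ m ∈ Finset.Icc 1 K, MvPolynomial.X 0 ^ (K - m) * emb (fI j m))
          = ∑ m ∈ Finset.Icc 1 K, w 0 ^ (K - m) * MvPolynomial.eval v (fI j m) := by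
        intro K
        rw [map_sum]
        refine Finset.sum_congr rfl fun m _ => ?_
        rw [map_mul, map_pow, MvPolynomial.eval_X]
        congr 1
        rw [emb, MvPolynomial.eval_rename]
        rfl
      rcases hk.2.eq_or_lt with hkd | hkd
      · subst hkd
        have h1 := heval (f j) ((hmem j).2 x hxX)
        rw [hdec j, hterm k] at h1
        exact h1
      · have hk' : k ∈ Finset.Icc 1 (d - 1) := Finset.mem_Icc.mpr ⟨hk.1, by omega⟩
        have hx' := hxD j k hk'
        rw [← hterm]
        exact heval _ (hx' _ rfl)
    have hvanc : ∀ (j : Fin r), ∀ k, k ∈ Finset.Icc 1 d →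
        MvPolynomial.eval v (fI j k) = 0 := by
      intro j k
      induction k using Nat.strong_induction_on with
      | _ k IH =>
        intro hk
        have h1 := hA j k hk
        rw [Finset.mem_Icc] at hk
        rw [Finset.sum_eq_single_of_mem k (Finset.mem_Icc.mpr ⟨hk.1, le_refl k⟩)] at h1
        · simpa using h1
        · intro m hm hmk
          rw [Finset.mem_Icc] at hm
          rw [IH m (by omega) (Finset.mem_Icc.mpr ⟨hm.1, by omega⟩), mul_zero]
    -- the line through p and x
    set wv : Fin (N + 1) → ℂ := Fin.cons 0 v with hwvdef
    set W : Submodule ℂ (Fin (N + 1) → ℂ) :=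
      Submodule.span ℂ ({e0vec N, wv} : Set (Fin (N + 1) → ℂ)) with hWdef
    set L : Set (Pr (N + 1)) := {y : Pr (N + 1) | y.submodule ≤ W} with hLdef
    have hwv0 : wv ≠ 0 := by
      intro h
      apply hvne
      funext j
      have := congrFun h j.succ
      simpa [wv] using this
    have hLline : IsLine L := by
      refine ⟨W, ?_, rfl⟩
      have hli : LinearIndependent ℂ ![e0vec N, wv] := by
        rw [linearIndependent_fin2]
        constructor
        · simpa using hwv0
        · intro a h
          have := congrFun h 0
          simp [wv, e0vec] at this
      have h2 : Set.range ![e0vec N, wv] = {e0vec N, wv} := by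
        ext z
        simp [Fin.exists_fin_two, or_comm]
      rw [hWdef, ← h2, finrank_span_eq_card hli]
      simp
    have hxL : x ∈ L := by
      show x.submodule ≤ W
      rw [Projectivization.submodule_eq]
      rw [Submodule.span_singleton_le_iff_mem]
      refine Submodule.mem_span_pair.mpr ⟨w 0, 1, ?_⟩
      funext j
      cases j using Fin.cases with
      | zero => simp [e0vec, wv]; rfl
      | succ j =>
        simp [e0vec, wv]
        rfl
    have hpL : pt0 N ∈ L := by
      show (pt0 N).submodule ≤ W
      rw [Projectivization.submodule_eq, Submodule.span_singleton_le_iff_mem]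
      obtain ⟨c, hc, hrep⟩ := rep_pt0 N
      rw [hrep]
      exact Submodule.smul_mem _ _ (Submodule.subset_span (Set.mem_insert _ _))
    have hLsub : L ⊆ X := by
      intro y hy
      apply mem_of_forall_vanish hX.1
      intro g hg
      obtain ⟨e, hghom, hgvan⟩ : ∃ e, g.IsHomogeneous e ∧ ∀ z ∈ X, VanishAt g z := by
        rw [vanPolys, Set.mem_iUnion] at hg
        obtain ⟨e, he1, he2⟩ := hg
        exact ⟨e, he1, he2⟩
      -- key vanishing along the line
      have key1 : ∀ μ : ℂ, MvPolynomial.eval (Fin.cons 1 (μ • v)) g = 0 := by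
        obtain ⟨i, s, hi, hs, hmem'⟩ := hcut g (Set.mem_iUnion.mpr ⟨e, hghom, hgvan⟩)
        have hi0 : i = 0 := pt0_index hi
        subst hi0
        rw [acoord_pt0] at hs
        have hpt : ∀ μ : ℂ, MvPolynomial.eval (Fin.cons 1 (μ • v)) s *
            MvPolynomial.eval (Fin.cons 1 (μ • v)) g = 0 := by
          intro μ
          set a : Fin (N + 1) → ℂ := Fin.cons 1 (μ • v) with hadef
          have ha0 : a 0 = 1 := rfl
          have hupd : Function.update a 0 1 = a := by
            rw [Function.update_eq_self_iff, ha0]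
          have hgen : Ideal.span (⇑(subst1 0) '' homVan X d)
              ≤ RingHom.ker (MvPolynomial.eval a) := by
            rw [Ideal.span_le]
            rintro _ ⟨h', hh', rfl⟩
            rw [SetLike.mem_coe, RingHom.mem_ker, eval_subst1, hupd]
            have hsp := hspan h' hh'
            refine Submodule.span_induction ?_ ?_ ?_ ?_ hsp
            · rintro _ ⟨j, rfl⟩
              rw [hdec j, map_sum]
              refine Finset.sum_eq_zero fun k hk => ?_
              rw [map_mul, map_pow, MvPolynomial.eval_X]
              have hcomp : MvPolynomial.eval a (emb (fI j k))
                  = MvPolynomial.eval (μ • v) (fI j k) := by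
                rw [emb, MvPolynomial.eval_rename]
                rfl
              rw [hcomp, eval_smul_of_isHomogeneous (hfI j k), hvanc j k hk,
                mul_zero, mul_zero]
            · simp
            · intro q1 q2 _ _ h1 h2
              rw [map_add, h1, h2, add_zero]
            · intro c q _ h1
              rw [MvPolynomial.smul_eq_C_mul, map_mul, h1, mul_zero]
          have h0 := hgen hmem'
          rw [RingHom.mem_ker, map_mul, eval_subst1, hupd] at h0
          exact h0
        set vars : Fin (N + 1) → Polynomial ℂ :=
          Fin.cons 1 (fun j => Polynomial.C (v j) * Polynomial.X) with hvars
        have hline : ∀ (z : Poly (N + 1)) (μ : ℂ),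
            Polynomial.eval μ (MvPolynomial.aeval vars z)
            = MvPolynomial.eval (Fin.cons 1 (μ • v)) z := by
          intro z μ
          have h1 : Polynomial.eval μ (MvPolynomial.aeval vars z)
              = MvPolynomial.aeval (fun j => Polynomial.aeval μ (vars j)) z := by
            rw [← Polynomial.coe_aeval_eq_eval, ← AlgHom.comp_apply,
              MvPolynomial.comp_aeval]
          have h2 : (fun j => Polynomial.aeval μ (vars j)) = Fin.cons 1 (μ • v) := by
            funext j
            cases j using Fin.cases with
            | zero => rw [hvars, Fin.cons_zero, map_one, Fin.cons_zero]
            | succ j =>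
              rw [hvars, Fin.cons_succ, map_mul, Polynomial.aeval_C,
                Polynomial.aeval_X, Fin.cons_succ]
              simp [mul_comm]
          rw [h1, h2]
          exact aeval_eq_eval' _ _
        have hcons0 : (Fin.cons 1 ((0 : ℂ) • v) : Fin (N + 1) → ℂ) = e0vec N := by
          rw [zero_smul]; rfl
        have hσ : (MvPolynomial.aeval vars s : Polynomial ℂ) ≠ 0 := by
          intro h
          apply hs
          have h2 := hline s 0
          rw [h, Polynomial.eval_zero, hcons0] at h2
          exact h2.symm
        have hprod : (MvPolynomial.aeval vars s) * (MvPolynomial.aeval vars g)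
            = (0 : Polynomial ℂ) := by
          apply Polynomial.funext
          intro μ
          rw [Polynomial.eval_mul, hline, hline, Polynomial.eval_zero]
          exact hpt μ
        have hγ : (MvPolynomial.aeval vars g : Polynomial ℂ) = 0 := by
          rcases mul_eq_zero.mp hprod with h | h
          · exact absurd h hσ
          · exact h
        intro μ
        rw [← hline g μ, hγ, Polynomial.eval_zero]
      have key : ∀ t b : ℂ, b ≠ 0 → MvPolynomial.eval (Fin.cons t (b • v)) g = 0 := by
        intro t b hb
        set vars2 : Fin (N + 1) → Polynomial ℂ :=
          Fin.cons Polynomial.X (fun j => Polynomial.C (b * v j)) with hvars2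
        have hline2 : ∀ (μ : ℂ), Polynomial.eval μ (MvPolynomial.aeval vars2 g)
            = MvPolynomial.eval (Fin.cons μ (b • v)) g := by
          intro μ
          have h1 : Polynomial.eval μ (MvPolynomial.aeval vars2 g)
              = MvPolynomial.aeval (fun j => Polynomial.aeval μ (vars2 j)) g := by
            rw [← Polynomial.coe_aeval_eq_eval, ← AlgHom.comp_apply,
              MvPolynomial.comp_aeval]
          have h2 : (fun j => Polynomial.aeval μ (vars2 j)) = Fin.cons μ (b • v) := by
            funext j
            cases j using Fin.cases with
            | zero => rw [hvars2, Fin.cons_zero, Polynomial.aeval_X, Fin.cons_zero]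
            | succ j =>
              rw [hvars2, Fin.cons_succ, Polynomial.aeval_C, Fin.cons_succ]
              simp
          rw [h1, h2]
          exact aeval_eq_eval' _ _
        have hroot : ∀ μ : ℂ, μ ≠ 0 → MvPolynomial.eval (Fin.cons μ (b • v)) g = 0 := by
          intro μ hμ
          have hsc : (Fin.cons μ (b • v) : Fin (N + 1) → ℂ)
              = μ • (Fin.cons 1 ((b / μ) • v) : Fin (N + 1) → ℂ) := by
            funext j
            cases j using Fin.cases with
            | zero => simp
            | succ j =>
              simp only [Fin.cons_succ, Pi.smul_apply, smul_eq_mul]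
              field_simp
          rw [hsc, eval_smul_of_isHomogeneous hghom, key1, mul_zero]
        have hQ : (MvPolynomial.aeval vars2 g : Polynomial ℂ) = 0 := by
          apply Polynomial.eq_zero_of_infinite_isRoot
          apply Set.Infinite.mono ?_ ((Set.finite_singleton (0 : ℂ)).infinite_compl)
          intro μ hμ
          simp only [Set.mem_compl_iff, Set.mem_singleton_iff] at hμ
          show Polynomial.IsRoot _ μ
          rw [Polynomial.IsRoot, hline2 μ, hroot μ hμ]
        rw [← hline2 t, hQ, Polynomial.eval_zero]
      -- conclude VanishAt g y
      intro u hu hmk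
      have huW : u ∈ W := by
        have h1 : u ∈ y.submodule := by
          rw [← hmk, Projectivization.submodule_mk]
          exact Submodule.mem_span_singleton_self u
        exact hy h1
      obtain ⟨a, b, hab⟩ := Submodule.mem_span_pair.mp huW
      have hu_eq : u = Fin.cons a (b • v) := by
        rw [← hab]
        funext j
        cases j using Fin.cases with
        | zero => simp [e0vec, wv]
        | succ j => simp [e0vec, wv]
      by_cases hb : b = 0
      · have ha : a ≠ 0 := by
          intro h
          apply hu
          rw [hu_eq, hb, h]
          funext j
          cases j using Fin.cases <;> simp
        have hy_eq : Projectivization.mk ℂ u hu = pt0 N := by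
          show _ = Projectivization.mk ℂ (e0vec N) (e0vec_ne N)
          rw [Projectivization.mk_eq_mk_iff]
          refine ⟨Units.mk0 a ha, ?_⟩
          rw [Units.smul_def, hu_eq, hb]
          funext j
          cases j using Fin.cases with
          | zero => simp [e0vec]
          | succ j => simp [e0vec]
        exact hgvan (pt0 N) hp u hu hy_eq
      · rw [hu_eq]
        exact key a b hb
    refine Set.mem_union_right _ ?_
    exact Set.mem_biUnion (show L ∈ linesThrough X (pt0 N) from ⟨hLline, hLsub, hpL⟩) hxL
  refine ⟨main, fun hline => ?_⟩
  apply Set.Subset.antisymm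
  · intro x hx
    have h1 := main hx
    rw [coneOfLines, hline] at h1
    simpa using h1
  · intro x hx
    rw [Set.mem_singleton_iff] at hx
    subst hx
    refine ⟨hp, ?_⟩
    simp only [Set.mem_iInter]
    intro j i hi g hg
    rw [Set.mem_singleton_iff] at hg
    subst hg
    intro u hu hmk
    obtain ⟨a, ha⟩ := (Projectivization.mk_eq_mk_iff ℂ u (e0vec N) hu (e0vec_ne N)).mp hmk
    rw [← ha, Units.smul_def, map_sum]
    refine Finset.sum_eq_zero fun k hk => ?_
    rw [map_mul, map_pow, MvPolynomial.eval_X]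
    have h1 : MvPolynomial.eval ((a : ℂ) • e0vec N) (emb (fI j k))
        = MvPolynomial.eval (((a : ℂ) • e0vec N) ∘ Fin.succ) (fI j k) := by
      rw [emb, MvPolynomial.eval_rename]
    have h2 : ((a : ℂ) • e0vec N) ∘ Fin.succ = ((0 : ℂ) • (0 : Fin N → ℂ)) := by
      funext j'
      simp [e0vec]
    have hk1 : 1 ≤ k := (Finset.mem_Icc.mp hk).1
    rw [h1, h2, eval_smul_of_isHomogeneous (hfI j k), zero_pow (by omega), zero_mul,
      mul_zero]

end PaperSC
end
end
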